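/- Let k ≥ 1 and let c : Fin k → EuclideanSpace ℝ (Fin 2) be an injective family of k mutually distinct points. Then there exists r₀ > 0 such that for every r with 0 < r < r₀, the lemniscate L_r = {x : EuclideanSpace ℝ (Fin 2) | ∏ j, ‖x − c j‖^2 = r} is a nonempty compact set whose space of connected components has exactly k elements, i.e., Nat.card (ConnectedComponents ↥L_r) = k. -/

import Mathlib

open Finset Metric Set

theorem piece_conn {E : Type*} [NormedAddCommGroup E] [NormedSpace ℝ E] [Nontrivial E]
    (hrank : 1 < Module.rank ℝ E) (a : E) (g : E → ℝ) (hg : Continuous g)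
    {ε m K r : ℝ} (hε : 0 < ε) (hm : 0 < m) (hK : 0 ≤ K)
    (hgm : ∀ x ∈ Metric.closedBall a ε, m ≤ g x)
    (hLip : ∀ x ∈ Metric.closedBall a ε, ∀ y ∈ Metric.closedBall a ε,
      dist (g x) (g y) ≤ K * dist x y)
    (hεK : ε * K < m) (hr0 : 0 < r) (hrm : r < ε ^ 2 * m) :
    ({x : E | ‖x - a‖ ^ 2 * g x = r} ∩ Metric.closedBall a ε).Nonempty ∧
    IsPreconnected ({x : E | ‖x - a‖ ^ 2 * g x = r} ∩ Metric.closedBall a ε) := by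
  classical
  have hsph : IsConnected (sphere (0 : E) 1) := isConnected_sphere hrank 0 zero_le_one
  have hsph_ne : Nonempty ↥(sphere (0 : E) 1) := hsph.nonempty.to_subtype
  have hnorm : ∀ u : ↥(sphere (0 : E) 1), ‖(u : E)‖ = 1 :=
    fun u => mem_sphere_zero_iff_norm.mp u.2
  -- the point a + t • u is in the ball
  have hφball : ∀ (u : ↥(sphere (0 : E) 1)), ∀ t ∈ Icc (0 : ℝ) ε,
      a + t • (u : E) ∈ Metric.closedBall a ε := by
    intro u t ht
    rw [Metric.mem_closedBall, dist_eq_norm, add_sub_cancel_left, norm_smul, hnorm, mul_one,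
      Real.norm_eq_abs, abs_of_nonneg ht.1]
    exact ht.2
  set H : ↥(sphere (0 : E) 1) → ℝ → ℝ := fun u t => t ^ 2 * g (a + t • (u : E)) with hHdef
  have hH_eq : ∀ (u : ↥(sphere (0 : E) 1)) (t : ℝ),
      ‖(a + t • (u : E)) - a‖ ^ 2 * g (a + t • (u : E)) = H u t := by
    intro u t
    rw [hHdef, add_sub_cancel_left, norm_smul, hnorm, mul_one, Real.norm_eq_abs, sq_abs]
  have hHc : ∀ u : ↥(sphere (0 : E) 1), Continuous (H u) := by
    intro u
    exact (continuous_pow 2).mul (hg.comp (continuous_const.add (continuous_id.smul continuous_const)))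
  have hdist : ∀ (u : ↥(sphere (0 : E) 1)) (s t : ℝ),
      dist (a + t • (u : E)) (a + s • (u : E)) = |t - s| := by
    intro u s t
    rw [dist_eq_norm]
    have : (a + t • (u : E)) - (a + s • (u : E)) = (t - s) • (u : E) := by
      rw [sub_smul]; abel
    rw [this, norm_smul, hnorm, mul_one, Real.norm_eq_abs]
  have hmono : ∀ u : ↥(sphere (0 : E) 1), StrictMonoOn (H u) (Icc 0 ε) := by
    intro u s hs t ht hst
    have h1 : m ≤ g (a + t • (u : E)) := hgm _ (hφball u t ht)
    have h2 : |g (a + t • (u : E)) - g (a + s • (u : E))| ≤ K * (t - s) := by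
      have h := hLip _ (hφball u t ht) _ (hφball u s hs)
      rwa [Real.dist_eq, hdist u s t, abs_of_nonneg (by linarith [hst] : (0:ℝ) ≤ t - s)] at h
    have h3 : g (a + s • (u : E)) ≤ g (a + t • (u : E)) + K * (t - s) := by
      have := neg_le_of_abs_le h2
      linarith
    have hgoal : s ^ 2 * g (a + s • (u : E)) < t ^ 2 * g (a + t • (u : E)) := by
      have hb : s ^ 2 * g (a + s • (u : E)) ≤ s ^ 2 * (g (a + t • (u : E)) + K * (t - s)) :=
        mul_le_mul_of_nonneg_left h3 (sq_nonneg s)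
      have ht0 : 0 < t := lt_of_le_of_lt hs.1 hst
      have hts : 0 ≤ t - s := by linarith
      have c0 : s ^ 2 ≤ ε * t := by nlinarith [hs.1, hst, ht.2, ht0]
      have c1 : s ^ 2 * K ≤ ε * t * K := mul_le_mul_of_nonneg_right c0 hK
      have c2 : s ^ 2 * K * (t - s) ≤ ε * t * K * (t - s) := mul_le_mul_of_nonneg_right c1 hts
      have c3 : ε * t * K * (t - s) < m * t * (t - s) := by
        have hpos : 0 < t * (t - s) := mul_pos ht0 (by linarith)
        nlinarith [mul_lt_mul_of_pos_right hεK hpos]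
      have c4 : m * t * (t - s) ≤ m * (t + s) * (t - s) := by nlinarith [mul_nonneg (mul_nonneg hm.le hs.1) hts]
      have c5 : m * (t + s) * (t - s) ≤ (t ^ 2 - s ^ 2) * g (a + t • (u : E)) := by
        have h6 : 0 ≤ (t + s) * (t - s) := mul_nonneg (by linarith [hs.1, ht0]) hts
        nlinarith [mul_le_mul_of_nonneg_right h1 h6]
      nlinarith [hb, c2, c3, c4, c5]
    exact hgoal
  have hHε : ∀ u, ε ^ 2 * m ≤ H u ε := by
    intro u
    have h := hgm _ (hφball u ε ⟨hε.le, le_rfl⟩)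
    exact mul_le_mul_of_nonneg_left h (sq_nonneg ε)
  have hH0 : ∀ u, H u 0 = 0 := by intro u; simp [hHdef]
  have exT : ∀ u, ∃ t, t ∈ Icc (0:ℝ) ε ∧ H u t = r := by
    intro u
    have hIVT := intermediate_value_Icc hε.le (hHc u).continuousOn
    have hrmem : r ∈ Icc (H u 0) (H u ε) :=
      ⟨by rw [hH0]; exact hr0.le, le_of_lt (lt_of_lt_of_le hrm (hHε u))⟩
    obtain ⟨t, ht, htr⟩ := hIVT hrmem
    exact ⟨t, ht, htr⟩
  choose T hTmem hTr using exT
  have hTuniq : ∀ u, ∀ t ∈ Icc (0:ℝ) ε, H u t = r → t = T u := by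
    intro u t ht htr
    exact (hmono u).injOn ht (hTmem u) (htr.trans (hTr u).symm)
  have hT0 : ∀ u, 0 < T u := by
    intro u
    rcases (hTmem u).1.lt_or_eq with h | h
    · exact h
    · exfalso
      have h2 := hTr u
      rw [← h, hH0] at h2
      exact hr0.ne' h2.symm
  have hTε : ∀ u, T u < ε := by
    intro u
    rcases (hTmem u).2.lt_or_eq with h | h
    · exact h
    · exfalso
      have h2 := hTr u
      rw [h] at h2
      linarith [hHε u]
  have hTcont : Continuous T := by
    rw [continuous_iff_continuousAt]
    intro u₀
    rw [ContinuousAt, Metric.tendsto_nhds]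
    intro η hη
    set t₀ := T u₀ with ht₀def
    set η' := min (η/2) (min (t₀/2) ((ε - t₀)/2)) with hη'def
    have hη'a : η' ≤ t₀/2 := le_trans (min_le_right _ _) (min_le_left _ _)
    have hη'b : η' ≤ (ε - t₀)/2 := le_trans (min_le_right _ _) (min_le_right _ _)
    have hη'c : η' ≤ η/2 := min_le_left _ _
    have hη'pos : 0 < η' :=
      lt_min (by linarith) (lt_min (by linarith [hT0 u₀]) (by linarith [hTε u₀]))
    have ht₀mem : t₀ ∈ Icc (0:ℝ) ε := hTmem u₀
    have hs₁mem : t₀ - η' ∈ Icc (0:ℝ) ε := ⟨by linarith [hT0 u₀], by linarith [hTε u₀]⟩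
    have hs₂mem : t₀ + η' ∈ Icc (0:ℝ) ε := ⟨by linarith [hT0 u₀], by linarith [hTε u₀]⟩
    have h₁ : H u₀ (t₀ - η') < r := by
      have h := hmono u₀ hs₁mem ht₀mem (by linarith)
      rwa [hTr u₀] at h
    have h₂ : r < H u₀ (t₀ + η') := by
      have h := hmono u₀ ht₀mem hs₂mem (by linarith)
      rwa [hTr u₀] at h
    have hc₁ : Continuous fun u : ↥(sphere (0:E) 1) => H u (t₀ - η') :=
      continuous_const.mul (hg.comp (continuous_const.add (continuous_subtype_val.const_smul _)))
    have hc₂ : Continuous fun u : ↥(sphere (0:E) 1) => H u (t₀ + η') :=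
      continuous_const.mul (hg.comp (continuous_const.add (continuous_subtype_val.const_smul _)))
    have hVopen : IsOpen {u : ↥(sphere (0:E) 1) | H u (t₀ - η') < r ∧ r < H u (t₀ + η')} :=
      (isOpen_lt hc₁ continuous_const).inter (isOpen_lt continuous_const hc₂)
    filter_upwards [hVopen.mem_nhds ⟨h₁, h₂⟩] with u hu
    have hu1 : t₀ - η' < T u := by
      by_contra hle
      push_neg at hle
      have h := (hmono u).monotoneOn (hTmem u) hs₁mem hle
      rw [hTr u] at h
      linarith [hu.1]
    have hu2 : T u < t₀ + η' := by
      by_contra hle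
      push_neg at hle
      have h := (hmono u).monotoneOn hs₂mem (hTmem u) hle
      rw [hTr u] at h
      linarith [hu.2]
    rw [Real.dist_eq, abs_lt]
    constructor <;> linarith
  haveI := hsph_ne
  set Φ : ↥(sphere (0:E) 1) → E := fun u => a + T u • (u : E) with hΦdef
  have hΦc : Continuous Φ := continuous_const.add (hTcont.smul continuous_subtype_val)
  have himg : {x : E | ‖x - a‖ ^ 2 * g x = r} ∩ Metric.closedBall a ε = Set.range Φ := by
    ext x
    constructor
    · rintro ⟨hx, hxb⟩
      simp only [Set.mem_setOf_eq] at hx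
      have hxa : x ≠ a := by
        rintro rfl
        rw [sub_self, norm_zero] at hx
        have : (0:ℝ) = r := by simpa using hx
        exact hr0.ne' this.symm
      have hs0 : 0 < ‖x - a‖ := norm_pos_iff.mpr (sub_ne_zero.mpr hxa)
      have hsε : ‖x - a‖ ≤ ε := by rwa [Metric.mem_closedBall, dist_eq_norm] at hxb
      have humem : ‖x - a‖⁻¹ • (x - a) ∈ sphere (0:E) 1 := by
        rw [mem_sphere_zero_iff_norm, norm_smul, norm_inv, Real.norm_eq_abs, abs_of_pos hs0,
          inv_mul_cancel₀ hs0.ne']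
      refine ⟨⟨_, humem⟩, ?_⟩
      have hφx : a + ‖x - a‖ • (‖x - a‖⁻¹ • (x - a)) = x := by
        rw [smul_smul, mul_inv_cancel₀ hs0.ne', one_smul]
        abel
      have hHs : H ⟨_, humem⟩ ‖x - a‖ = r := by
        rw [← hH_eq]
        show ‖(a + ‖x - a‖ • (‖x - a‖⁻¹ • (x - a))) - a‖ ^ 2 * g _ = r
        rw [hφx]
        exact hx
      have hT' : ‖x - a‖ = T ⟨_, humem⟩ := hTuniq _ _ ⟨hs0.le, hsε⟩ hHs
      show a + T ⟨_, humem⟩ • _ = x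
      rw [← hT']
      exact hφx
    · rintro ⟨u, rfl⟩
      refine ⟨?_, hφball u (T u) ⟨(hT0 u).le, (hTε u).le⟩⟩
      show ‖(a + T u • (u:E)) - a‖ ^ 2 * g (a + T u • (u:E)) = r
      rw [hH_eq]
      exact hTr u
  rw [himg]
  refine ⟨Set.range_nonempty Φ, ?_⟩
  have : PreconnectedSpace ↥(sphere (0:E) 1) := by
    rw [← isPreconnected_iff_preconnectedSpace]
    exact hsph.isPreconnected
  exact isPreconnected_range hΦc


theorem card_components_of_partition {X : Type*} [TopologicalSpace X] {k : ℕ}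
    (P : Fin k → Set X)
    (hO : ∀ j, IsOpen (P j)) (hC : ∀ j, IsPreconnected (P j)) (hN : ∀ j, (P j).Nonempty)
    (hU : ∀ x, ∃ j, x ∈ P j) (hD : ∀ i j, i ≠ j → Disjoint (P i) (P j)) :
    Nat.card (ConnectedComponents X) = k := by
  classical
  set q : X → Fin k := fun x => (hU x).choose with hqdef
  have hq : ∀ x, x ∈ P (q x) := fun x => (hU x).choose_spec
  have hqj : ∀ x j, x ∈ P j → q x = j := by
    intro x j h
    by_contra hne
    exact Set.disjoint_left.mp (hD _ _ hne) (hq x) h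
  have hcont : Continuous q := by
    rw [continuous_discrete_rng]
    intro j
    have : q ⁻¹' {j} = P j := by
      ext x
      exact ⟨fun h => by simpa using (h : q x = j) ▸ hq x, fun h => hqj x j h⟩
    rw [this]; exact hO j
  have hbij : Function.Bijective hcont.connectedComponentsLift := by
    constructor
    · intro A B hAB
      obtain ⟨x, rfl⟩ := ConnectedComponents.surjective_coe A
      obtain ⟨y, rfl⟩ := ConnectedComponents.surjective_coe B
      rw [hcont.connectedComponentsLift_apply_coe, hcont.connectedComponentsLift_apply_coe] at hAB
      have hy : y ∈ P (q x) := hAB ▸ hq y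
      have hsub : P (q x) ⊆ connectedComponent x := (hC _).subset_connectedComponent (hq x)
      exact (ConnectedComponents.coe_eq_coe).mpr (connectedComponent_eq (hsub hy))
    · intro j
      obtain ⟨x, hx⟩ := hN j
      refine ⟨ConnectedComponents.mk x, ?_⟩
      show hcont.connectedComponentsLift ↑x = j
      rw [hcont.connectedComponentsLift_apply_coe]
      exact hqj x j hx
  rw [Nat.card_eq_of_bijective _ hbij]
  simp


set_option maxHeartbeats 1000000

theorem lemniscate_components
    (k : ℕ) (hk : 1 ≤ k)
    (c : Fin k → EuclideanSpace ℝ (Fin 2)) (hc : Function.Injective c) :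
    ∃ r₀ : ℝ, 0 < r₀ ∧ ∀ r : ℝ, 0 < r → r < r₀ →
      ({x : EuclideanSpace ℝ (Fin 2) | ∏ j, ‖x - c j‖ ^ 2 = r}).Nonempty ∧
      IsCompact {x : EuclideanSpace ℝ (Fin 2) | ∏ j, ‖x - c j‖ ^ 2 = r} ∧
      Nat.card
        (ConnectedComponents
          {x : EuclideanSpace ℝ (Fin 2) | ∏ j, ‖x - c j‖ ^ 2 = r}) = k := by
  classical
  haveI : Nonempty (Fin k) := ⟨⟨0, hk⟩⟩
  have hrank : 1 < Module.rank ℝ (EuclideanSpace ℝ (Fin 2)) := by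
    rw [← Module.finrank_eq_rank]
    have h2 : Module.finrank ℝ (EuclideanSpace ℝ (Fin 2)) = 2 := finrank_euclideanSpace_fin
    rw [h2]
    norm_num
  -- separation constant
  obtain ⟨δ, hδ0, hδsep⟩ : ∃ δ : ℝ, 0 < δ ∧ ∀ i j, i ≠ j → 3 * δ ≤ dist (c i) (c j) := by
    by_cases hs : (Finset.univ.filter fun p : Fin k × Fin k => p.1 ≠ p.2).Nonempty
    · obtain ⟨p, hp, hmin⟩ :=
        Finset.exists_min_image _ (fun p : Fin k × Fin k => dist (c p.1) (c p.2)) hs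
      have hpne : p.1 ≠ p.2 := (Finset.mem_filter.mp hp).2
      have hd0 : 0 < dist (c p.1) (c p.2) := dist_pos.mpr fun h => hpne (hc h)
      refine ⟨dist (c p.1) (c p.2) / 3, by linarith, fun i j hij => ?_⟩
      have := hmin (i, j) (Finset.mem_filter.mpr ⟨Finset.mem_univ _, hij⟩)
      simpa using by linarith [this]
    · exact ⟨1, one_pos, fun i j hij =>
        absurd (Finset.mem_filter.mpr ⟨Finset.mem_univ (i, j), hij⟩)
          (fun h => hs ⟨_, h⟩)⟩
  -- the product with one factor removed
  set g : Fin k → EuclideanSpace ℝ (Fin 2) → ℝ := fun j x => ∏ i ∈ Finset.univ.erase j, ‖x - c i‖ ^ 2 with hgdef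
  have hgc : ∀ j, Continuous (g j) :=
    fun j => continuous_finset_prod _ fun i _ => ((continuous_id.sub continuous_const).norm.pow 2)
  have hfg : ∀ (j : Fin k) (x : EuclideanSpace ℝ (Fin 2)), (∏ i, ‖x - c i‖ ^ 2) = ‖x - c j‖ ^ 2 * g j x :=
    fun j x => (Finset.mul_prod_erase Finset.univ _ (Finset.mem_univ j)).symm
  -- Lipschitz constants
  have hKex : ∀ j, ∃ K : ℝ, 0 ≤ K ∧ ∀ x ∈ Metric.closedBall (c j) δ,
      ∀ y ∈ Metric.closedBall (c j) δ, dist (g j x) (g j y) ≤ K * dist x y := by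
    intro j
    have hsm : ContDiff ℝ 1 (g j) :=
      contDiff_prod fun i _ => ContDiff.norm_sq ℝ (contDiff_id.sub contDiff_const)
    have hfc : Continuous (fderiv ℝ (g j)) := hsm.continuous_fderiv one_ne_zero
    obtain ⟨C, hC⟩ := (isCompact_closedBall (c j) δ).exists_bound_of_continuousOn
      hfc.continuousOn
    set Knn : NNReal := ⟨max C 0, le_max_right _ _⟩ with hKnn
    have hlip : LipschitzOnWith Knn (g j) (Metric.closedBall (c j) δ) := by
      apply Convex.lipschitzOnWith_of_nnnorm_fderiv_le
        (fun x _ => (hsm.differentiable one_ne_zero).differentiableAt)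
        (fun x hx => ?_) (convex_closedBall _ _)
      rw [← NNReal.coe_le_coe, coe_nnnorm]
      exact le_trans (hC x hx) (le_max_left _ _)
    exact ⟨Knn, Knn.2, fun x hx y hy => hlip.dist_le_mul x hx y hy⟩
  choose K hK0 hKlip using hKex
  -- lower bound for g on the balls
  set m : ℝ := ((2 * δ) ^ 2) ^ (k - 1) with hmdef
  have hm : 0 < m := by positivity
  have hgm : ∀ j, ∀ x ∈ Metric.closedBall (c j) δ, m ≤ g j x := by
    intro j x hx
    have hcard : (Finset.univ.erase j).card = k - 1 := by
      rw [Finset.card_erase_of_mem (Finset.mem_univ j), Finset.card_univ, Fintype.card_fin]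
    have : m = ∏ _i ∈ Finset.univ.erase j, (2 * δ) ^ 2 := by
      rw [Finset.prod_const, hcard]
    rw [this]
    apply Finset.prod_le_prod (fun i _ => by positivity)
    intro i hi
    have hij : i ≠ j := Finset.mem_erase.mp hi |>.1
    have h1 : 3 * δ ≤ dist (c i) (c j) := hδsep i j hij
    have h2 : dist (c i) (c j) ≤ dist (c i) x + dist x (c j) := dist_triangle _ _ _
    have h3 : dist x (c j) ≤ δ := Metric.mem_closedBall.mp hx
    have h4 : 2 * δ ≤ dist x (c i) := by rw [dist_comm]; linarith
    have h5 : dist x (c i) = ‖x - c i‖ := dist_eq_norm _ _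
    have h6 : 2 * δ ≤ ‖x - c i‖ := h5 ▸ h4
    exact pow_le_pow_left₀ (by linarith) h6 2
  -- the scale ε
  set KM : ℝ := Finset.univ.sup' Finset.univ_nonempty K with hKM
  have hKMle : ∀ j, K j ≤ KM := fun j => Finset.le_sup' K (Finset.mem_univ j)
  have hKM0 : 0 ≤ KM := le_trans (hK0 ⟨0, hk⟩) (hKMle ⟨0, hk⟩)
  set ε : ℝ := min (δ / 2) (m / (KM + 1)) with hεdef
  have hε : 0 < ε := lt_min (by linarith) (div_pos hm (by linarith))
  have hεδ2 : ε ≤ δ / 2 := min_le_left _ _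
  have hεδ : ε ≤ δ := by linarith
  have hεm : ε * (KM + 1) ≤ m := by
    rw [← le_div_iff₀ (by linarith : (0:ℝ) < KM + 1)]
    exact min_le_right _ _
  have hεK : ∀ j, ε * K j < m := by
    intro j
    have h1 : ε * K j ≤ ε * KM := mul_le_mul_of_nonneg_left (hKMle j) hε.le
    nlinarith [hεm, hε]
  refine ⟨min ((ε ^ 2) ^ k) (ε ^ 2 * m), lt_min (by positivity) (by positivity), ?_⟩
  intro r hr0 hrr₀
  have hrε2k : r < (ε ^ 2) ^ k := lt_of_lt_of_le hrr₀ (min_le_left _ _)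
  have hrεm : r < ε ^ 2 * m := lt_of_lt_of_le hrr₀ (min_le_right _ _)
  -- the pieces
  have hpiece : ∀ j, ({x : EuclideanSpace ℝ (Fin 2) | ‖x - c j‖ ^ 2 * g j x = r} ∩ Metric.closedBall (c j) ε).Nonempty ∧
      IsPreconnected ({x : EuclideanSpace ℝ (Fin 2) | ‖x - c j‖ ^ 2 * g j x = r} ∩ Metric.closedBall (c j) ε) := by
    intro j
    exact piece_conn hrank (c j) (g j) (hgc j) hε hm (hK0 j)
      (fun x hx => hgm j x (Metric.closedBall_subset_closedBall hεδ hx))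
      (fun x hx y hy => hKlip j x (Metric.closedBall_subset_closedBall hεδ hx)
        y (Metric.closedBall_subset_closedBall hεδ hy))
      (hεK j) hr0 hrεm
  have hLeq : ∀ j, {x : EuclideanSpace ℝ (Fin 2) | ‖x - c j‖ ^ 2 * g j x = r}
      = {x : EuclideanSpace ℝ (Fin 2) | ∏ i, ‖x - c i‖ ^ 2 = r} := by
    intro j
    ext x
    simp only [Set.mem_setOf_eq, hfg j x]
  -- lower bound far from all points
  have hbig : ∀ x : EuclideanSpace ℝ (Fin 2), (∀ i, ε ≤ dist x (c i)) → (ε ^ 2) ^ k ≤ ∏ i, ‖x - c i‖ ^ 2 := by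
    intro x hx
    have : (ε ^ 2) ^ k = ∏ _i : Fin k, ε ^ 2 := by
      rw [Finset.prod_const, Finset.card_univ, Fintype.card_fin]
    rw [this]
    apply Finset.prod_le_prod (fun i _ => by positivity)
    intro i _
    have h5 : dist x (c i) = ‖x - c i‖ := dist_eq_norm _ _
    exact pow_le_pow_left₀ hε.le (h5 ▸ hx i) 2
  have hcover : ∀ x : EuclideanSpace ℝ (Fin 2), (∏ i, ‖x - c i‖ ^ 2 = r) → ∃ j, dist x (c j) < ε := by
    intro x hx
    by_contra h
    push_neg at h
    have := hbig x h
    rw [hx] at this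
    linarith
  -- nonempty
  have hne : ({x : EuclideanSpace ℝ (Fin 2) | ∏ i, ‖x - c i‖ ^ 2 = r}).Nonempty := by
    obtain ⟨x, hx1, _⟩ := (hpiece ⟨0, hk⟩).1
    exact ⟨x, (hLeq ⟨0, hk⟩) ▸ hx1⟩
  refine ⟨hne, ?_, ?_⟩
  -- compact
  · apply isCompact_of_isClosed_isBounded
    · have : {x : EuclideanSpace ℝ (Fin 2) | ∏ i, ‖x - c i‖ ^ 2 = r}
          = (fun x : EuclideanSpace ℝ (Fin 2) => ∏ i, ‖x - c i‖ ^ 2) ⁻¹' {r} := rfl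
      rw [this]
      exact IsClosed.preimage
        (continuous_finset_prod _ fun i _ => (continuous_id.sub continuous_const).norm.pow 2)
        isClosed_singleton
    · apply Bornology.IsBounded.subset
        (Bornology.isBounded_iUnion.mpr fun j : Fin k => Metric.isBounded_closedBall
          (x := c j) (r := ε))
      intro x hx
      obtain ⟨j, hj⟩ := hcover x hx
      exact Set.mem_iUnion.mpr ⟨j, Metric.mem_closedBall.mpr hj.le⟩
  -- component count
  · apply card_components_of_partition
      (fun j => (Subtype.val : {x : EuclideanSpace ℝ (Fin 2) | ∏ i, ‖x - c i‖ ^ 2 = r} → EuclideanSpace ℝ (Fin 2)) ⁻¹'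
        Metric.closedBall (c j) ε)
    · -- open
      intro j
      have hPeq : (Subtype.val ⁻¹' Metric.closedBall (c j) ε :
            Set {x : EuclideanSpace ℝ (Fin 2) | ∏ i, ‖x - c i‖ ^ 2 = r})
          = Subtype.val ⁻¹' Metric.ball (c j) δ := by
        ext ⟨x, hx⟩
        simp only [Set.mem_preimage, Metric.mem_closedBall, Metric.mem_ball]
        constructor
        · intro h; linarith
        · intro h
          by_contra hcon
          push_neg at hcon
          have hall : ∀ i, ε ≤ dist x (c i) := by
            intro i
            rcases eq_or_ne i j with rfl | hij
            · exact hcon.le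
            · have h1 : 3 * δ ≤ dist (c i) (c j) := hδsep i j hij
              have h2 : dist (c i) (c j) ≤ dist (c i) x + dist x (c j) := dist_triangle _ _ _
              rw [dist_comm (c i) x] at h2
              linarith
          have := hbig x hall
          have hxr : (∏ i, ‖x - c i‖ ^ 2) = r := hx
          rw [hxr] at this
          linarith
      rw [hPeq]
      exact (Metric.isOpen_ball).preimage continuous_subtype_val
    · -- preconnected
      intro j
      rw [← Topology.IsInducing.subtypeVal.isPreconnected_image]
      rw [Subtype.image_preimage_coe]
      rw [← hLeq j]
      exact (hpiece j).2
    · -- nonempty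
      intro j
      obtain ⟨x, hx1, hx2⟩ := (hpiece j).1
      exact ⟨⟨x, (hLeq j) ▸ hx1⟩, hx2⟩
    · -- cover
      intro x
      obtain ⟨j, hj⟩ := hcover x.1 x.2
      refine ⟨j, ?_⟩
      show dist (x : EuclideanSpace ℝ (Fin 2)) (c j) ≤ ε
      exact hj.le
    · -- disjoint
      intro i j hij
      rw [Set.disjoint_left]
      rintro ⟨x, hx⟩ hxi hxj
      have h1 : dist x (c i) ≤ ε := hxi
      have h2 : dist x (c j) ≤ ε := hxj
      have h3 : 3 * δ ≤ dist (c i) (c j) := hδsep i j hij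
      have h4 : dist (c i) (c j) ≤ dist (c i) x + dist x (c j) := dist_triangle _ _ _
      rw [dist_comm (c i) x] at h4
      linarith
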